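/- Let F_q be the finite field with q elements and let r ≥ 1 with r + 1 ≤ q. Then there exist a polynomial f ∈ F_q[x] of degree r+1 and pairwise disjoint subsets S_1, ..., S_N of F_q, each of size r+1, with N ≥ ⌈C(q, r+1)/q^r⌉, such that f is constant on each S_j (where C(q, r+1) denotes the binomial coefficient). -/

import Mathlib

open Polynomial Finset

theorem stmt_8 {F : Type*} [Field F] [Fintype F] [DecidableEq F]
    (q r : ℕ) (hq : Fintype.card F = q) (hr : 1 ≤ r) (hrq : r + 1 ≤ q) :
    ∃ (f : Polynomial F) (N : ℕ) (S : Fin N → Finset F),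
      f.natDegree = r + 1 ∧
      (q.choose (r + 1) : ℚ) / (q ^ r : ℚ) ≤ (N : ℚ) ∧
      (∀ j, (S j).card = r + 1) ∧
      (∀ j j', j ≠ j' → Disjoint (S j) (S j')) ∧
      (∀ j, ∀ α ∈ S j, ∀ β ∈ S j, f.eval α = f.eval β) := by
  classical
  set P : Finset F → F[X] := fun A => ∏ a ∈ A, (X - C a) with hP
  have hPmonic : ∀ A : Finset F, (P A).Monic := fun A =>
    monic_prod_of_monic _ _ fun a _ => monic_X_sub_C a
  have hPdeg : ∀ A : Finset F, (P A).natDegree = A.card := by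
    intro A
    exact natDegree_multiset_prod_X_sub_C_eq_card (A.val)
  have hPeval : ∀ (A : Finset F), ∀ a ∈ A, (P A).eval a = 0 := by
    intro A a ha
    rw [hP]
    simp only [eval_prod]
    exact Finset.prod_eq_zero ha (by simp)
  have hPinj : ∀ A B : Finset F, P A = P B → A = B := by
    intro A B h
    have := congrArg Polynomial.roots h
    rw [hP] at this
    simp only [roots_prod_X_sub_C] at this
    exact Finset.val_injective this
  set T : Finset (Finset F) := Finset.univ.powersetCard (r + 1) with hT
  have hTmem : ∀ A ∈ T, A.card = r + 1 := by
    intro A hA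
    rw [hT, Finset.mem_powersetCard] at hA
    exact hA.2
  have hTcard : T.card = q.choose (r + 1) := by
    rw [hT, Finset.card_powersetCard, Finset.card_univ, hq]
  set Φ : Finset F → (Fin r → F) := fun A i => (P A).coeff (i + 1) with hΦ
  -- difference of two polynomials with same Φ is a constant
  have hkey : ∀ A B : Finset F, A.card = r + 1 → B.card = r + 1 → Φ A = Φ B →
      P A = P B + C ((P A - P B).coeff 0) := by
    intro A B hA hB hAB
    have hdeg : (P A - P B).natDegree ≤ 0 := by
      rw [natDegree_le_iff_coeff_eq_zero]
      intro m hm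
      rw [coeff_sub]
      rcases lt_trichotomy m (r + 1) with h1 | h1 | h1
      · -- 1 ≤ m ≤ r
        have hm1 : m - 1 < r := by omega
        have := congrFun hAB ⟨m - 1, hm1⟩
        simp only [hΦ] at this
        have hm' : (m - 1) + 1 = m := by omega
        rw [hm'] at this
        rw [this, sub_self]
      · subst h1
        have h1 : (P A).coeff (r + 1) = 1 := by
          have := (hPmonic A).coeff_natDegree
          rwa [hPdeg, hA] at this
        have h2 : (P B).coeff (r + 1) = 1 := by
          have := (hPmonic B).coeff_natDegree
          rwa [hPdeg, hB] at this
        rw [h1, h2, sub_self]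
      · have h1 : (P A).coeff m = 0 :=
          coeff_eq_zero_of_natDegree_lt (by rw [hPdeg, hA]; omega)
        have h2 : (P B).coeff m = 0 :=
          coeff_eq_zero_of_natDegree_lt (by rw [hPdeg, hB]; omega)
        rw [h1, h2, sub_self]
    have := Polynomial.eq_C_of_natDegree_le_zero hdeg
    linear_combination (norm := ring_nf) this
  -- pigeonhole
  have hqpos : 0 < q := by omega
  have hcard : Fintype.card (Fin r → F) = q ^ r := by
    simp [hq]
  obtain ⟨y, -, hy⟩ := Finset.exists_max_image (Finset.univ : Finset (Fin r → F))
      (fun y => (T.filter fun A => Φ A = y).card)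
      ⟨fun _ => 0, Finset.mem_univ _⟩
  set Fib : Finset (Finset F) := T.filter fun A => Φ A = y with hFib
  set N : ℕ := Fib.card with hN
  have hsum : T.card = ∑ z : Fin r → F, (T.filter fun A => Φ A = z).card :=
    Finset.card_eq_sum_card_fiberwise (fun A _ => Finset.mem_univ (Φ A))
  have hpig : q.choose (r + 1) ≤ q ^ r * N := by
    rw [← hTcard, hsum, ← hcard]
    calc ∑ z : Fin r → F, (T.filter fun A => Φ A = z).card
        ≤ ∑ _z : Fin r → F, N := Finset.sum_le_sum fun z _ => hy z (Finset.mem_univ z)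
      _ = Fintype.card (Fin r → F) * N := by
          rw [Finset.sum_const, Finset.card_univ, smul_eq_mul]
  have hchoosepos : 0 < q.choose (r + 1) := Nat.choose_pos hrq
  have hNpos : 0 < N := by
    by_contra h
    push_neg at h
    interval_cases N <;> omega
  -- members of Fib
  have hFibmem : ∀ A ∈ Fib, A.card = r + 1 ∧ Φ A = y := by
    intro A hA
    rw [hFib, Finset.mem_filter] at hA
    exact ⟨hTmem A hA.1, hA.2⟩
  set S : Fin N → Finset F := fun j => (Fib.equivFin.symm j : Finset F) with hS
  have hSmem : ∀ j, S j ∈ Fib := fun j => (Fib.equivFin.symm j).2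
  have hSinj : Function.Injective S := by
    intro j j' h
    have : Fib.equivFin.symm j = Fib.equivFin.symm j' := Subtype.ext h
    exact Fib.equivFin.symm.injective this
  set j0 : Fin N := ⟨0, hNpos⟩ with hj0
  refine ⟨P (S j0), N, S, ?_, ?_, ?_, ?_, ?_⟩
  · rw [hPdeg, (hFibmem _ (hSmem j0)).1]
  · rw [div_le_iff₀ (by positivity)]
    calc ((q.choose (r + 1) : ℚ)) ≤ ((q ^ r * N : ℕ) : ℚ) := by exact_mod_cast hpig
      _ = (N : ℚ) * (q : ℚ) ^ r := by push_cast; ring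
  · exact fun j => (hFibmem _ (hSmem j)).1
  · intro j j' hjj'
    rw [Finset.disjoint_left]
    intro a haj haj'
    apply hjj'
    apply hSinj
    apply hPinj
    have h1 := hkey (S j) (S j') (hFibmem _ (hSmem j)).1 (hFibmem _ (hSmem j')).1
      (by rw [(hFibmem _ (hSmem j)).2, (hFibmem _ (hSmem j')).2])
    have h2 := congrArg (Polynomial.eval a) h1
    rw [eval_add, eval_C, hPeval _ a haj, hPeval _ a haj'] at h2
    have h3 : (P (S j) - P (S j')).coeff 0 = 0 := by rw [zero_add] at h2; exact h2.symm
    rw [h1, h3, map_zero, add_zero]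
  · intro j α hα β hβ
    have h1 := hkey (S j0) (S j) (hFibmem _ (hSmem j0)).1 (hFibmem _ (hSmem j)).1
      (by rw [(hFibmem _ (hSmem j0)).2, (hFibmem _ (hSmem j)).2])
    have hα' := congrArg (Polynomial.eval α) h1
    have hβ' := congrArg (Polynomial.eval β) h1
    rw [eval_add, eval_C, hPeval _ α hα] at hα'
    rw [eval_add, eval_C, hPeval _ β hβ] at hβ'
    rw [hα', hβ']
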